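/- For all nonnegative integers t and all n ≥ 0, the number of overpartition t-tuples satisfies p̄_t(4n+3) ≡ 0 (mod 8). -/

import Mathlib

/-- The number of overpartitions of `n`: a partition of `n` together with a
choice of which distinct part values are overlined (the first occurrence of a
part value may be overlined), so that the count is `∑_{λ ⊢ n} 2^{#distinct parts of λ}`. -/
def overpartitionCount (n : ℕ) : ℕ :=
  ∑ p : n.Partition, 2 ^ p.parts.toFinset.card

/-- The number of overpartition `t`-tuples of `n`: `t`-tuples of overpartitions
whose sizes sum to `n`. -/
def overpartitionTuples (t n : ℕ) : ℕ :=
  ∑ c ∈ Finset.Nat.antidiagonalTuple t n, ∏ i, overpartitionCount (c i)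

open Finset

def DD (m : ℕ) : ℕ := (Nat.divisorsAntidiagonal m).card
def Sg (m : ℕ) : ℕ := ∑ p ∈ Nat.divisorsAntidiagonal m, p.2
def S2 (m : ℕ) : ℕ := ∑ p ∈ Finset.HasAntidiagonal.antidiagonal m, DD p.1 * DD p.2
def A1 (m : ℕ) : ℕ := #(univ.filter (fun p : m.Partition => p.parts.toFinset.card = 1))
def A2 (m : ℕ) : ℕ := #(univ.filter (fun p : m.Partition => p.parts.toFinset.card = 2))

lemma multiset_eq_single (s : Multiset ℕ) (a : ℕ) (h : s.toFinset ⊆ {a}) :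
    s = Multiset.replicate (s.count a) a := by
  ext c
  rw [Multiset.count_replicate]
  by_cases hc : a = c
  · subst hc; rw [if_pos rfl]
  · simp only [if_neg hc]
    by_contra h0
    have : c ∈ s.toFinset := Multiset.mem_toFinset.2 (Multiset.count_pos.1 (Nat.pos_of_ne_zero h0))
    exact hc (Finset.mem_singleton.1 (h this)).symm

lemma multiset_eq_pair (s : Multiset ℕ) (a b : ℕ) (hab : a ≠ b) (h : s.toFinset ⊆ {a, b}) :
    s = Multiset.replicate (s.count a) a + Multiset.replicate (s.count b) b := by
  ext c
  rw [Multiset.count_add, Multiset.count_replicate, Multiset.count_replicate]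
  rcases eq_or_ne c a with rfl | hca
  · rw [if_pos rfl, if_neg (fun hh => hab hh.symm), add_zero]
  rcases eq_or_ne c b with rfl | hcb
  · rw [if_neg (fun hh => hca hh.symm), if_pos rfl, zero_add]
  · rw [if_neg (fun hh => hca hh.symm), if_neg (fun hh => hcb hh.symm), add_zero]
    by_contra h0
    have : c ∈ s.toFinset := Multiset.mem_toFinset.2 (Multiset.count_pos.1 (Nat.pos_of_ne_zero h0))
    rcases Finset.mem_insert.1 (h this) with h1 | h1
    · exact hca h1
    · exact hcb (Finset.mem_singleton.1 h1)

lemma partition_zero_parts (p : (0:ℕ).Partition) : p.parts = 0 := by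
  by_contra h
  obtain ⟨x, hx⟩ := Multiset.exists_mem_of_ne_zero h
  have h1 : 0 < x := p.parts_pos hx
  have h2 : x ≤ p.parts.sum := Multiset.le_sum_of_mem hx
  rw [p.parts_sum] at h2
  omega

def zeroPartition : (0:ℕ).Partition := ⟨0, by simp, rfl⟩

lemma univ_partition_zero : (Finset.univ : Finset (0:ℕ).Partition) = {zeroPartition} := by
  ext p
  simp only [Finset.mem_univ, Finset.mem_singleton, true_iff]
  exact Nat.Partition.ext (partition_zero_parts p)

lemma opc_zero : overpartitionCount 0 = 1 := by
  rw [overpartitionCount, univ_partition_zero, Finset.sum_singleton]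
  simp [zeroPartition]

lemma A0 (m : ℕ) :
    #(univ.filter (fun p : m.Partition => p.parts.toFinset.card = 0)) = if m = 0 then 1 else 0 := by
  rcases eq_or_ne m 0 with rfl | hm
  · rw [if_pos rfl, univ_partition_zero]
    rw [Finset.filter_singleton, if_pos (by simp [zeroPartition])]
    simp
  · rw [if_neg hm]
    rw [Finset.card_eq_zero, Finset.filter_eq_empty_iff]
    intro p _
    intro hcard
    have : p.parts.toFinset = ∅ := Finset.card_eq_zero.1 hcard
    have hp : p.parts = 0 := by
      rwa [Multiset.toFinset_eq_empty] at this
    have := p.parts_sum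
    rw [hp] at this
    simp at this
    exact hm this.symm

lemma pow_two_zmod8 (k : ℕ) : (2 : ZMod 8)^k =
    (if k = 0 then 1 else 0) + (if k = 1 then 2 else 0) + (if k = 2 then 4 else 0) := by
  match k with
  | 0 => decide
  | 1 => decide
  | 2 => decide
  | (n+3) =>
    have h8 : (2:ZMod 8)^3 = 0 := by decide
    rw [pow_add, h8, mul_zero, if_neg (by omega), if_neg (by omega), if_neg (by omega)]
    simp

lemma opc_cast (m : ℕ) : ((overpartitionCount m : ℕ) : ZMod 8) =
    (if m = 0 then 1 else 0) + 2 * A1 m + 4 * A2 m := by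
  rw [overpartitionCount]
  push_cast
  have : ∀ p : m.Partition, ((2:ZMod 8) ^ p.parts.toFinset.card) =
      (if p.parts.toFinset.card = 0 then 1 else 0) + (if p.parts.toFinset.card = 1 then 2 else 0)
        + (if p.parts.toFinset.card = 2 then 4 else 0) := fun p => pow_two_zmod8 _
  rw [Finset.sum_congr rfl (fun p _ => this p)]
  rw [Finset.sum_add_distrib, Finset.sum_add_distrib]
  rw [← Finset.sum_filter, ← Finset.sum_filter, ← Finset.sum_filter]
  simp only [Finset.sum_const, nsmul_eq_mul, mul_one]
  rw [A0]
  rw [A1, A2]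
  push_cast
  ring

def rectPart (m : ℕ) (x : ℕ × ℕ) (hx : x ∈ Nat.divisorsAntidiagonal m) : m.Partition where
  parts := Multiset.replicate x.2 x.1
  parts_pos := by
    intro i hi
    rw [Multiset.eq_of_mem_replicate hi]
    rcases Nat.mem_divisorsAntidiagonal.1 hx with ⟨h1, h2⟩
    rcases Nat.eq_zero_or_pos x.1 with h | h
    · exfalso; rw [h, zero_mul] at h1; exact h2 h1.symm
    · exact h
  parts_sum := by
    rcases Nat.mem_divisorsAntidiagonal.1 hx with ⟨h1, _⟩
    rw [Multiset.sum_replicate, smul_eq_mul, mul_comm]; exact h1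

lemma A1_eq_DD (m : ℕ) : A1 m = DD m := by
  rw [A1, DD]
  symm
  refine Finset.card_bij (rectPart m) ?_ ?_ ?_
  · intro x hx
    rcases Nat.mem_divisorsAntidiagonal.1 hx with ⟨h1, h2⟩
    have hx2 : x.2 ≠ 0 := by rintro h; rw [h, mul_zero] at h1; exact h2 h1.symm
    simp only [Finset.mem_filter, Finset.mem_univ, true_and]
    show (Multiset.replicate x.2 x.1).toFinset.card = 1
    rw [Multiset.toFinset_replicate, if_neg hx2]
    exact Finset.card_singleton _
  · intro x hx y hy hxy
    have h : Multiset.replicate x.2 x.1 = Multiset.replicate y.2 y.1 :=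
      congrArg Nat.Partition.parts hxy
    rcases Nat.mem_divisorsAntidiagonal.1 hx with ⟨h1, h2⟩
    have hx2 : x.2 ≠ 0 := by rintro hh; rw [hh, mul_zero] at h1; exact h2 h1.symm
    have hmem : x.1 ∈ Multiset.replicate y.2 y.1 := by
      rw [← h]; exact Multiset.mem_replicate.2 ⟨hx2, rfl⟩
    have he : x.1 = y.1 := Multiset.eq_of_mem_replicate hmem
    have hc : x.2 = y.2 := by
      have := congrArg Multiset.card h; simpa using this
    exact Prod.ext he hc
  · intro p hp
    simp only [Finset.mem_filter, Finset.mem_univ, true_and] at hp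
    obtain ⟨a, ha⟩ := Finset.card_eq_one.1 hp
    have hsub : p.parts.toFinset ⊆ {a} := by rw [ha]
    have hparts := multiset_eq_single _ a hsub
    have hmem_a : a ∈ p.parts := by
      have : a ∈ p.parts.toFinset := by rw [ha]; exact Finset.mem_singleton_self a
      exact Multiset.mem_toFinset.1 this
    have hsum : a * p.parts.count a = m := by
      calc a * p.parts.count a = (Multiset.replicate (p.parts.count a) a).sum := by
            rw [Multiset.sum_replicate, smul_eq_mul, mul_comm]
        _ = p.parts.sum := by rw [← hparts]
        _ = m := p.parts_sum
    have hm0 : m ≠ 0 := by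
      rintro rfl
      rw [partition_zero_parts p] at hmem_a
      simp at hmem_a
    refine ⟨(a, p.parts.count a), Nat.mem_divisorsAntidiagonal.2 ⟨hsum, hm0⟩, ?_⟩
    apply Nat.Partition.ext
    show Multiset.replicate (p.parts.count a) a = p.parts
    exact hparts.symm

lemma tuples_zero (t : ℕ) : overpartitionTuples t 0 = 1 := by
  rw [overpartitionTuples, Finset.Nat.antidiagonalTuple_zero_right, Finset.sum_singleton]
  simp [opc_zero]

lemma tuples_t_zero (N : ℕ) : overpartitionTuples 0 N = if N = 0 then 1 else 0 := by
  rcases N with _ | n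
  · rw [overpartitionTuples, Finset.Nat.antidiagonalTuple_zero_zero]; simp
  · rw [overpartitionTuples, Finset.Nat.antidiagonalTuple_zero_succ]; simp

lemma tuples_succ (t N : ℕ) : overpartitionTuples (t+1) N =
    ∑ p ∈ Finset.HasAntidiagonal.antidiagonal N, overpartitionCount p.1 * overpartitionTuples t p.2 := by
  have hrw : ∀ p ∈ Finset.HasAntidiagonal.antidiagonal N, overpartitionCount p.1 * overpartitionTuples t p.2 =
      ∑ c ∈ Finset.Nat.antidiagonalTuple t p.2,
        overpartitionCount p.1 * ∏ i, overpartitionCount (c i) := by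
    intro p _; rw [overpartitionTuples, Finset.mul_sum]
  have key := Finset.sum_sigma (Finset.HasAntidiagonal.antidiagonal N)
    (fun p => Finset.Nat.antidiagonalTuple t p.2)
    (fun x => overpartitionCount x.1.1 * ∏ i, overpartitionCount (x.2 i))
  rw [Finset.sum_congr rfl hrw, ← key, overpartitionTuples]
  refine Finset.sum_nbij' (fun c => ⟨(c 0, ∑ i, Fin.tail c i), Fin.tail c⟩)
    (fun x => Fin.cons x.1.1 x.2) ?_ ?_ ?_ ?_ ?_
  · intro c hc
    rw [Finset.Nat.mem_antidiagonalTuple] at hc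
    refine Finset.mem_sigma.2 ⟨Finset.HasAntidiagonal.mem_antidiagonal.2 ?_, Finset.Nat.mem_antidiagonalTuple.2 rfl⟩
    rw [← hc, Fin.sum_univ_succ]
    rfl
  · intro x hx
    rw [Finset.mem_sigma] at hx
    rcases hx with ⟨hx1, hx2⟩
    rw [Finset.Nat.mem_antidiagonalTuple]
    rw [Fin.sum_cons, Finset.Nat.mem_antidiagonalTuple.1 hx2]
    exact Finset.HasAntidiagonal.mem_antidiagonal.1 hx1
  · intro c hc
    simp [Fin.cons_self_tail]
  · rintro ⟨⟨u, v⟩, d⟩ hx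
    rw [Finset.mem_sigma] at hx
    rcases hx with ⟨hx1, hx2⟩
    simp only [Fin.cons_zero, Fin.tail_cons]
    rw [Finset.Nat.mem_antidiagonalTuple.1 hx2]
  · intro c hc
    rw [Fin.prod_univ_succ]
    rfl

lemma zmod4_helper : ∀ a b : ZMod 4, a * b = 3 → a + b = 0 := by decide

lemma zmod4_sq : ∀ a : ZMod 4, a * a ≠ 3 := by decide

lemma cast_three {N : ℕ} (h : N % 4 = 3) : (N : ZMod 4) = 3 := by
  rw [← ZMod.natCast_mod, h]; rfl

lemma da_prod_cast {N : ℕ} (h : N % 4 = 3) {x : ℕ × ℕ}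
    (hx : x ∈ Nat.divisorsAntidiagonal N) : (x.1 : ZMod 4) * (x.2 : ZMod 4) = 3 := by
  rcases Nat.mem_divisorsAntidiagonal.1 hx with ⟨h1, _⟩
  rw [← Nat.cast_mul, h1, cast_three h]

lemma da_swap_ne {N : ℕ} (h : N % 4 = 3) {x : ℕ × ℕ}
    (hx : x ∈ Nat.divisorsAntidiagonal N) : x.swap ≠ x := by
  intro he
  have h2 : x.2 = x.1 := congrArg Prod.fst he
  have := da_prod_cast h hx
  rw [h2] at this
  exact zmod4_sq _ this

lemma Sg_div {N : ℕ} (h : N % 4 = 3) : 4 ∣ Sg N := by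
  rw [← ZMod.natCast_eq_zero_iff, Sg, Nat.cast_sum]
  refine Finset.sum_involution (fun x _ => x.swap) ?_ ?_ ?_ ?_
  · intro x hx
    have := da_prod_cast h hx
    have h2 := zmod4_helper _ _ this
    rw [Prod.snd_swap, add_comm]
    exact h2
  · intro x hx _
    exact da_swap_ne h hx
  · intro x hx
    exact Nat.swap_mem_divisorsAntidiagonal.2 hx
  · intro x hx
    exact Prod.swap_swap x

lemma DD_even_of_mod (N : ℕ) (h : N % 4 = 3) : 2 ∣ DD N := by
  rw [← ZMod.natCast_eq_zero_iff, DD, Finset.card_eq_sum_ones, Nat.cast_sum]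
  refine Finset.sum_involution (fun x _ => x.swap) ?_ ?_ ?_ ?_
  · intro x hx; decide
  · intro x hx _
    exact da_swap_ne h hx
  · intro x hx
    exact Nat.swap_mem_divisorsAntidiagonal.2 hx
  · intro x hx
    exact Prod.swap_swap x

lemma sq_mod4 (m : ℕ) (h : IsSquare m) : m % 4 = 0 ∨ m % 4 = 1 := by
  obtain ⟨k, rfl⟩ := h
  have h1 : k % 4 = 0 ∨ k % 4 = 1 ∨ k % 4 = 2 ∨ k % 4 = 3 := by omega
  have h2 := Nat.mul_mod k k 4
  rcases h1 with h | h | h | h <;> rw [h] at h2 <;> omega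

lemma DD_even_of_not_sq (u : ℕ) (h : ¬ IsSquare u) : 2 ∣ DD u := by
  rw [← ZMod.natCast_eq_zero_iff, DD, Finset.card_eq_sum_ones, Nat.cast_sum]
  refine Finset.sum_involution (fun x _ => x.swap) ?_ ?_ ?_ ?_
  · intro x hx; decide
  · intro x hx _
    intro he
    have h2 : x.2 = x.1 := congrArg Prod.fst he
    rcases Nat.mem_divisorsAntidiagonal.1 hx with ⟨h1, _⟩
    rw [h2] at h1
    exact h ⟨x.1, h1.symm⟩
  · intro x hx
    exact Nat.swap_mem_divisorsAntidiagonal.2 hx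
  · intro x hx
    exact Prod.swap_swap x

lemma S2_div {N : ℕ} (h : N % 4 = 3) : 4 ∣ S2 N := by
  rw [← ZMod.natCast_eq_zero_iff, S2, Nat.cast_sum]
  refine Finset.sum_involution (fun x _ => x.swap) ?_ ?_ ?_ ?_
  · intro x hx
    rw [Finset.HasAntidiagonal.mem_antidiagonal] at hx
    have hdvd : 2 ∣ DD x.1 * DD x.2 := by
      by_cases hs : IsSquare x.1
      · have hs2 : ¬ IsSquare x.2 := by
          intro hs2
          rcases sq_mod4 _ hs with h1 | h1 <;> rcases sq_mod4 _ hs2 with h2 | h2 <;> omega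
        exact Dvd.dvd.mul_left (DD_even_of_not_sq _ hs2) _
      · exact Dvd.dvd.mul_right (DD_even_of_not_sq _ hs) _
    obtain ⟨k, hk⟩ := hdvd
    rw [Prod.fst_swap, Prod.snd_swap, mul_comm (DD x.2) (DD x.1), hk, ← Nat.cast_add,
      ZMod.natCast_eq_zero_iff]
    omega
  · intro x hx _
    intro he
    have h2 : x.2 = x.1 := congrArg Prod.fst he
    rw [Finset.HasAntidiagonal.mem_antidiagonal] at hx
    omega
  · intro x hx
    rw [Finset.HasAntidiagonal.mem_antidiagonal] at hx ⊢
    rw [Prod.fst_swap, Prod.snd_swap]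
    omega
  · intro x hx
    exact Prod.swap_swap x

def W (N : ℕ) : Finset (Σ _ : ℕ × ℕ, (ℕ × ℕ) × (ℕ × ℕ)) :=
  (Finset.HasAntidiagonal.antidiagonal N).sigma
    (fun p => Nat.divisorsAntidiagonal p.1 ×ˢ Nat.divisorsAntidiagonal p.2)

lemma mem_W_iff {N : ℕ} {x : Σ _ : ℕ × ℕ, (ℕ × ℕ) × (ℕ × ℕ)} : x ∈ W N ↔
    x.1.1 + x.1.2 = N ∧ (x.2.1.1 * x.2.1.2 = x.1.1 ∧ x.1.1 ≠ 0) ∧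
      (x.2.2.1 * x.2.2.2 = x.1.2 ∧ x.1.2 ≠ 0) := by
  rw [W, Finset.mem_sigma, Finset.mem_product, Finset.HasAntidiagonal.mem_antidiagonal,
    Nat.mem_divisorsAntidiagonal, Nat.mem_divisorsAntidiagonal, and_assoc]

lemma card_W (N : ℕ) : #(W N) = S2 N := by
  rw [W, Finset.card_sigma, S2]
  refine Finset.sum_congr rfl ?_
  intro p _
  rw [Finset.card_product, DD, DD]

lemma card_W_split (N : ℕ) :
    S2 N = #((W N).filter (fun x => x.2.1.1 < x.2.2.1))
      + #((W N).filter (fun x => x.2.1.1 = x.2.2.1))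
      + #((W N).filter (fun x => x.2.2.1 < x.2.1.1)) := by
  rw [← card_W]
  have h1 := Finset.card_filter_add_card_filter_not
    (s := W N) (p := fun x => x.2.1.1 < x.2.2.1)
  have e2 : (W N).filter (fun x => ¬ x.2.1.1 < x.2.2.1) =
      ((W N).filter (fun x => x.2.1.1 = x.2.2.1)) ∪
        ((W N).filter (fun x => x.2.2.1 < x.2.1.1)) := by
    rw [← Finset.filter_or]
    apply Finset.filter_congr
    intro x _
    constructor
    · intro h; omega
    · intro h; omega
  have hdisj : Disjoint ((W N).filter (fun x => x.2.1.1 = x.2.2.1))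
      ((W N).filter (fun x => x.2.2.1 < x.2.1.1)) := by
    rw [Finset.disjoint_left]
    intro x hx1 hx2
    rw [Finset.mem_filter] at hx1 hx2
    omega
  rw [← h1, e2, Finset.card_union_of_disjoint hdisj, add_assoc]

lemma card_Wgt_eq_Wlt (N : ℕ) : #((W N).filter (fun x => x.2.2.1 < x.2.1.1))
    = #((W N).filter (fun x => x.2.1.1 < x.2.2.1)) := by
  refine Finset.card_nbij' (fun x => ⟨x.1.swap, (x.2.2, x.2.1)⟩)
    (fun x => ⟨x.1.swap, (x.2.2, x.2.1)⟩) ?_ ?_ ?_ ?_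
  · intro x hx
    rw [Finset.mem_coe, Finset.mem_filter] at hx ⊢
    rcases hx with ⟨hw, hlt⟩
    rw [mem_W_iff] at hw
    refine ⟨mem_W_iff.2 ?_, hlt⟩
    simp only [Prod.fst_swap, Prod.snd_swap]
    omega
  · intro x hx
    rw [Finset.mem_coe, Finset.mem_filter] at hx ⊢
    rcases hx with ⟨hw, hlt⟩
    rw [mem_W_iff] at hw
    refine ⟨mem_W_iff.2 ?_, hlt⟩
    simp only [Prod.fst_swap, Prod.snd_swap]
    omega
  · rintro ⟨⟨u, v⟩, ⟨p, q⟩⟩ _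
    rfl
  · rintro ⟨⟨u, v⟩, ⟨p, q⟩⟩ _
    rfl

def V (N : ℕ) : Finset (Σ _ : ℕ × ℕ, ℕ × ℕ) :=
  (Nat.divisorsAntidiagonal N).sigma
    (fun am => (Finset.HasAntidiagonal.antidiagonal am.2).filter (fun q => q.1 ≠ 0 ∧ q.2 ≠ 0))

lemma card_V (N : ℕ) (hN : N ≠ 0) : #(V N) + DD N = Sg N := by
  rw [V, Finset.card_sigma, DD, Finset.card_eq_sum_ones, ← Finset.sum_add_distrib, Sg]
  refine Finset.sum_congr rfl ?_
  intro p hp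
  have hpos : 0 < p.2 := Nat.pos_of_mem_divisors (Nat.snd_mem_divisors_of_mem_antidiagonal hp)
  have hcard : #((Finset.HasAntidiagonal.antidiagonal p.2).filter (fun q => q.1 ≠ 0 ∧ q.2 ≠ 0)) = p.2 - 1 := by
    rw [← Finset.card_range (p.2 - 1)]
    refine Finset.card_nbij' (fun q => q.1 - 1) (fun k => (k + 1, p.2 - (k + 1))) ?_ ?_ ?_ ?_
    · intro q hq
      rw [Finset.mem_coe, Finset.mem_filter, Finset.HasAntidiagonal.mem_antidiagonal] at hq
      rw [Finset.mem_coe, Finset.mem_range]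
      dsimp only
      omega
    · intro k hk
      rw [Finset.mem_coe, Finset.mem_range] at hk
      rw [Finset.mem_coe, Finset.mem_filter, Finset.HasAntidiagonal.mem_antidiagonal]
      dsimp only
      omega
    · intro q hq
      rw [Finset.mem_coe, Finset.mem_filter, Finset.HasAntidiagonal.mem_antidiagonal] at hq
      dsimp only
      have h1 : q.1 - 1 + 1 = q.1 := by omega
      rw [h1, show p.2 - q.1 = q.2 from by omega]
    · intro k hk
      rw [Finset.mem_coe, Finset.mem_range] at hk
      dsimp only
      omega
  rw [hcard]
  omega

lemma card_Weq (N : ℕ) : #((W N).filter (fun x => x.2.1.1 = x.2.2.1)) = #(V N) := by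
  refine Finset.card_nbij' (fun x => ⟨(x.2.1.1, x.2.1.2 + x.2.2.2), (x.2.1.2, x.2.2.2)⟩)
    (fun y => ⟨(y.1.1 * y.2.1, y.1.1 * y.2.2), ((y.1.1, y.2.1), (y.1.1, y.2.2))⟩) ?_ ?_ ?_ ?_
  · intro x hx
    rw [Finset.mem_coe, Finset.mem_filter, mem_W_iff] at hx
    obtain ⟨⟨hsum, ⟨h1, h2⟩, ⟨h3, h4⟩⟩, heq⟩ := hx
    rw [V, Finset.mem_coe, Finset.mem_sigma]
    constructor
    · rw [Nat.mem_divisorsAntidiagonal]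
      dsimp only
      constructor
      · rw [Nat.mul_add, h1, ← heq] at *
        omega
      · omega
    · rw [Finset.mem_filter, Finset.HasAntidiagonal.mem_antidiagonal]
      dsimp only
      refine ⟨rfl, ?_, ?_⟩
      · rintro h0; rw [h0, mul_zero] at h1; omega
      · rintro h0; rw [h0, mul_zero] at h3; omega
  · intro y hy
    rw [V, Finset.mem_coe, Finset.mem_sigma, Nat.mem_divisorsAntidiagonal, Finset.mem_filter,
      Finset.HasAntidiagonal.mem_antidiagonal] at hy
    obtain ⟨⟨hprod, hN0⟩, hsum, hx0, hy0⟩ := hy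
    rw [Finset.mem_coe, Finset.mem_filter, mem_W_iff]
    dsimp only
    have ha0 : y.1.1 ≠ 0 := by
      rintro h0; rw [h0, zero_mul] at hprod; omega
    refine ⟨⟨?_, ⟨rfl, ?_⟩, ⟨rfl, ?_⟩⟩, rfl⟩
    · rw [← Nat.mul_add, hsum, hprod]
    · exact Nat.mul_ne_zero ha0 hx0
    · exact Nat.mul_ne_zero ha0 hy0
  · rintro ⟨⟨u, v⟩, ⟨a, xx⟩, ⟨b, yy⟩⟩ hx
    rw [Finset.mem_coe, Finset.mem_filter, mem_W_iff] at hx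
    obtain ⟨⟨hsum, ⟨h1, h2⟩, ⟨h3, h4⟩⟩, heq⟩ := hx
    dsimp only at *
    subst heq
    rw [h1, h3]
  · rintro ⟨⟨a, m⟩, ⟨xx, yy⟩⟩ hy
    rw [V, Finset.mem_coe, Finset.mem_sigma, Nat.mem_divisorsAntidiagonal, Finset.mem_filter,
      Finset.HasAntidiagonal.mem_antidiagonal] at hy
    obtain ⟨⟨hprod, hN0⟩, hsum, hx0, hy0⟩ := hy
    dsimp only at *
    rw [hsum]

def pairPart (N : ℕ) (x : Σ _ : ℕ × ℕ, (ℕ × ℕ) × (ℕ × ℕ)) (hx : x ∈ W N) : N.Partition where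
  parts := Multiset.replicate x.2.1.2 x.2.1.1 + Multiset.replicate x.2.2.2 x.2.2.1
  parts_pos := by
    intro i hi
    obtain ⟨hsum, ⟨h1, h2⟩, ⟨h3, h4⟩⟩ := mem_W_iff.1 hx
    rcases Multiset.mem_add.1 hi with hh | hh
    · rw [Multiset.eq_of_mem_replicate hh]
      rcases Nat.eq_zero_or_pos x.2.1.1 with h | h
      · rw [h, zero_mul] at h1; omega
      · exact h
    · rw [Multiset.eq_of_mem_replicate hh]
      rcases Nat.eq_zero_or_pos x.2.2.1 with h | h
      · rw [h, zero_mul] at h3; omega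
      · exact h
  parts_sum := by
    obtain ⟨hsum, ⟨h1, h2⟩, ⟨h3, h4⟩⟩ := mem_W_iff.1 hx
    rw [Multiset.sum_add, Multiset.sum_replicate, Multiset.sum_replicate,
      smul_eq_mul, smul_eq_mul, mul_comm x.2.1.2, mul_comm x.2.2.2, h1, h3, hsum]

lemma card_Wlt (N : ℕ) : #((W N).filter (fun x => x.2.1.1 < x.2.2.1)) = A2 N := by
  rw [A2]
  refine Finset.card_bij (fun x hx => pairPart N x (Finset.mem_of_mem_filter x hx)) ?_ ?_ ?_
  · intro x hx
    rw [Finset.mem_filter] at hx ⊢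
    obtain ⟨hw, hlt⟩ := hx
    obtain ⟨hsum, ⟨h1, h2⟩, ⟨h3, h4⟩⟩ := mem_W_iff.1 hw
    refine ⟨Finset.mem_univ _, ?_⟩
    show ((Multiset.replicate x.2.1.2 x.2.1.1) + (Multiset.replicate x.2.2.2 x.2.2.1)).toFinset.card = 2
    have hx2 : x.2.1.2 ≠ 0 := by rintro h0; rw [h0, mul_zero] at h1; omega
    have hy2 : x.2.2.2 ≠ 0 := by rintro h0; rw [h0, mul_zero] at h3; omega
    rw [Multiset.toFinset_add, Multiset.toFinset_replicate, Multiset.toFinset_replicate,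
      if_neg hx2, if_neg hy2]
    rw [show ({x.2.1.1} ∪ {x.2.2.1} : Finset ℕ) = {x.2.1.1, x.2.2.1} from rfl]
    rw [Finset.card_insert_of_notMem (by rw [Finset.mem_singleton]; omega)]
    simp
  · rintro ⟨⟨u, v⟩, ⟨a, xx⟩, ⟨b, yy⟩⟩ hx ⟨⟨u', v'⟩, ⟨a', xx'⟩, ⟨b', yy'⟩⟩ hy hxy
    rw [Finset.mem_filter] at hx hy
    obtain ⟨hwx, hltx⟩ := hx
    obtain ⟨hwy, hlty⟩ := hy
    obtain ⟨hsumx, ⟨hx1, hx2⟩, ⟨hx3, hx4⟩⟩ := mem_W_iff.1 hwx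
    obtain ⟨hsumy, ⟨hy1, hy2⟩, ⟨hy3, hy4⟩⟩ := mem_W_iff.1 hwy
    dsimp only at *
    have hparts : Multiset.replicate xx a + Multiset.replicate yy b =
        Multiset.replicate xx' a' + Multiset.replicate yy' b' :=
      congrArg Nat.Partition.parts hxy
    have hxx0 : xx ≠ 0 := by rintro h0; rw [h0, mul_zero] at hx1; omega
    have hyy0 : yy ≠ 0 := by rintro h0; rw [h0, mul_zero] at hx3; omega
    have hxx0' : xx' ≠ 0 := by rintro h0; rw [h0, mul_zero] at hy1; omega
    have hyy0' : yy' ≠ 0 := by rintro h0; rw [h0, mul_zero] at hy3; omega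
    -- a ∈ RHS
    have hamem : a ∈ Multiset.replicate xx' a' + Multiset.replicate yy' b' := by
      rw [← hparts, Multiset.mem_add]
      exact Or.inl (Multiset.mem_replicate.2 ⟨hxx0, rfl⟩)
    have hbmem : b ∈ Multiset.replicate xx' a' + Multiset.replicate yy' b' := by
      rw [← hparts, Multiset.mem_add]
      exact Or.inr (Multiset.mem_replicate.2 ⟨hyy0, rfl⟩)
    have hamem' : a' ∈ Multiset.replicate xx a + Multiset.replicate yy b := by
      rw [hparts, Multiset.mem_add]
      exact Or.inl (Multiset.mem_replicate.2 ⟨hxx0', rfl⟩)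
    have ha : a = a' ∧ b = b' := by
      rcases Multiset.mem_add.1 hamem with hh | hh <;>
        rcases Multiset.mem_add.1 hbmem with gg | gg <;>
        rcases Multiset.mem_add.1 hamem' with ff | ff <;>
        first
          | (exact ⟨Multiset.eq_of_mem_replicate hh, Multiset.eq_of_mem_replicate gg⟩)
          | (exfalso;
             have e1 := Multiset.eq_of_mem_replicate hh;
             have e2 := Multiset.eq_of_mem_replicate gg;
             have e3 := Multiset.eq_of_mem_replicate ff;
             omega)
    obtain ⟨rfl, rfl⟩ := (by exact ha : a = a' ∧ b = b')
    have hcx : xx = xx' := by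
      have := congrArg (Multiset.count a) hparts
      rw [Multiset.count_add, Multiset.count_add, Multiset.count_replicate,
        Multiset.count_replicate, Multiset.count_replicate, Multiset.count_replicate] at this
      rw [if_pos rfl, if_pos rfl, if_neg (by omega), if_neg (by omega)] at this
      omega
    have hcy : yy = yy' := by
      have := congrArg (Multiset.count b) hparts
      rw [Multiset.count_add, Multiset.count_add, Multiset.count_replicate,
        Multiset.count_replicate, Multiset.count_replicate, Multiset.count_replicate] at this
      rw [if_pos rfl, if_pos rfl, if_neg (by omega), if_neg (by omega)] at this
      omega
    subst hcx
    subst hcy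
    have : u = u' := by omega
    have : v = v' := by omega
    subst this
    subst ‹u = u'›
    rfl
  · intro p hp
    rw [Finset.mem_filter] at hp
    obtain ⟨-, hp2⟩ := hp
    obtain ⟨c, d, hcd, hset⟩ := Finset.card_eq_two.1 hp2
    -- order them
    have key : ∀ a b : ℕ, a < b → p.parts.toFinset = {a, b} →
        ∃ x hx, pairPart N x hx = p ∧ x ∈ (W N).filter (fun x => x.2.1.1 < x.2.2.1) := by
      intro a b hab hset
      have hsub : p.parts.toFinset ⊆ {a, b} := by rw [hset]
      have hparts := multiset_eq_pair _ a b (by omega) hsub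
      have hamem : a ∈ p.parts := Multiset.mem_toFinset.1 (by rw [hset]; exact Finset.mem_insert_self _ _)
      have hbmem : b ∈ p.parts := Multiset.mem_toFinset.1 (by rw [hset]; simp)
      have hca : p.parts.count a ≠ 0 := by
        rw [← Multiset.count_pos] at hamem; omega
      have hcb : p.parts.count b ≠ 0 := by
        rw [← Multiset.count_pos] at hbmem; omega
      have hapos : 0 < a := p.parts_pos hamem
      have hbpos : 0 < b := p.parts_pos hbmem
      have hsum : a * p.parts.count a + b * p.parts.count b = N := by
        have := p.parts_sum
        rw [hparts, Multiset.sum_add, Multiset.sum_replicate, Multiset.sum_replicate,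
          smul_eq_mul, smul_eq_mul] at this
        rw [mul_comm a, mul_comm b]
        exact this
      have hW : (⟨(a * p.parts.count a, b * p.parts.count b),
          ((a, p.parts.count a), (b, p.parts.count b))⟩ :
            Σ _ : ℕ × ℕ, (ℕ × ℕ) × (ℕ × ℕ)) ∈ W N := by
        rw [mem_W_iff]
        dsimp only
        refine ⟨hsum, ⟨rfl, ?_⟩, ⟨rfl, ?_⟩⟩
        · exact Nat.mul_ne_zero (by omega) hca
        · exact Nat.mul_ne_zero (by omega) hcb
      refine ⟨_, hW, ?_, ?_⟩
      · apply Nat.Partition.ext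
        show Multiset.replicate (p.parts.count a) a + Multiset.replicate (p.parts.count b) b
          = p.parts
        exact hparts.symm
      · rw [Finset.mem_filter]
        exact ⟨hW, hab⟩
    rcases Nat.lt_or_ge c d with hlt | hge
    · obtain ⟨x, hx, heq, hmem⟩ := key c d hlt hset
      exact ⟨x, hmem, by rw [← heq]⟩
    · have hdc : d < c := by omega
      obtain ⟨x, hx, heq, hmem⟩ := key d c hdc (by rw [hset, Finset.pair_comm])
      exact ⟨x, hmem, by rw [← heq]⟩

lemma identity5 (N : ℕ) (hN : N ≠ 0) : 2 * A2 N + Sg N = S2 N + DD N := by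
  have h1 := card_W_split N
  have h2 := card_Wgt_eq_Wlt N
  have h3 := card_Weq N
  have h4 := card_V N hN
  have h5 := card_Wlt N
  omega

lemma DD_zero : DD 0 = 0 := by simp [DD]
lemma A2_zero : A2 0 = 0 := by
  rw [A2, Finset.card_eq_zero, Finset.filter_eq_empty_iff]
  intro p _
  rw [partition_zero_parts p]
  simp

lemma S2_zero : S2 0 = 0 := by simp [S2, DD_zero]

lemma zmod8_key : ∀ a b c d : ZMod 8, (2*a + 4*b) * (2*c + 4*d) = 4*(a*c) := by decide

lemma pointwise (t C : ℕ) (u v : ℕ) :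
    ((if u = 0 then 1 else 0) + 2 * (DD u : ZMod 8) + 4 * A2 u) *
      ((if v = 0 then 1 else 0) + 2 * t * DD v + 4 * (t * A2 v + C * S2 v)) =
    (if u = 0 then 1 else 0) * ((if v = 0 then 1 else 0) + 2 * t * DD v + 4 * (t * A2 v + C * S2 v))
      + (if v = 0 then 1 else 0) * (2 * DD u + 4 * A2 u)
      + 4 * t * (DD u * DD v) := by
  rcases eq_or_ne u 0 with rfl | hu
  · rw [if_pos rfl, DD_zero, A2_zero]
    push_cast
    ring
  · rw [if_neg hu]
    rcases eq_or_ne v 0 with rfl | hv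
    · rw [if_pos rfl, DD_zero, A2_zero, S2_zero]
      push_cast
      ring
    · rw [if_neg hv]
      have := zmod8_key (DD u) (A2 u) ((t : ZMod 8) * DD v) ((t * A2 v + C * S2 v : ZMod 8))
      calc (0 + 2 * (DD u : ZMod 8) + 4 * A2 u) *
            (0 + 2 * t * DD v + 4 * (t * A2 v + C * S2 v))
          = (2 * (DD u : ZMod 8) + 4 * A2 u) *
            (2 * ((t : ZMod 8) * DD v) + 4 * (t * A2 v + C * S2 v)) := by ring
        _ = 4 * ((DD u : ZMod 8) * ((t : ZMod 8) * DD v)) := zmod8_key _ _ _ _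
        _ = 0 * (0 + 2 * t * DD v + 4 * (t * A2 v + C * S2 v))
            + 0 * (2 * DD u + 4 * A2 u) + 4 * t * ((DD u : ZMod 8) * DD v) := by ring

lemma opc_cast' (m : ℕ) : ((overpartitionCount m : ℕ) : ZMod 8) =
    (if m = 0 then 1 else 0) + 2 * (DD m : ZMod 8) + 4 * A2 m := by
  rw [opc_cast, A1_eq_DD]

lemma main_lemma (t : ℕ) : ∀ N : ℕ, ((overpartitionTuples t N : ℕ) : ZMod 8) =
    (if N = 0 then 1 else 0) + 2 * t * DD N + 4 * (t * A2 N + Nat.choose t 2 * S2 N) := by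
  induction t with
  | zero =>
    intro N
    rw [tuples_t_zero]
    rcases eq_or_ne N 0 with rfl | h
    · simp
    · simp [h]
  | succ t ih =>
    intro N
    rw [tuples_succ, Nat.cast_sum]
    have hterm : ∀ p ∈ Finset.HasAntidiagonal.antidiagonal N,
        ((overpartitionCount p.1 * overpartitionTuples t p.2 : ℕ) : ZMod 8) =
        (if p.1 = 0 then 1 else 0) *
          ((if p.2 = 0 then 1 else 0) + 2 * t * DD p.2 + 4 * (t * A2 p.2 + Nat.choose t 2 * S2 p.2))
        + (if p.2 = 0 then 1 else 0) * (2 * DD p.1 + 4 * A2 p.1)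
        + 4 * t * ((DD p.1 : ZMod 8) * DD p.2) := by
      intro p _
      rw [Nat.cast_mul, opc_cast' p.1, ih p.2]
      exact pointwise t (Nat.choose t 2) p.1 p.2
    rw [Finset.sum_congr rfl hterm]
    rw [Finset.sum_add_distrib, Finset.sum_add_distrib]
    have hs1 : ∑ p ∈ Finset.HasAntidiagonal.antidiagonal N, (if p.1 = 0 then (1:ZMod 8) else 0) *
        ((if p.2 = 0 then 1 else 0) + 2 * t * DD p.2 + 4 * (t * A2 p.2 + Nat.choose t 2 * S2 p.2))
        = (if N = 0 then 1 else 0) + 2 * t * DD N + 4 * (t * A2 N + Nat.choose t 2 * S2 N) := by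
      rw [Finset.sum_eq_single (0, N)]
      · rw [if_pos rfl, one_mul]
      · intro b hb hne
        rw [Finset.HasAntidiagonal.mem_antidiagonal] at hb
        have : b.1 ≠ 0 := by
          rintro h0
          apply hne
          have : b.2 = N := by omega
          rw [← h0, ← this]
        rw [if_neg this, zero_mul]
      · intro h
        exfalso
        exact h (Finset.HasAntidiagonal.mem_antidiagonal.2 (by simp))
    have hs2 : ∑ p ∈ Finset.HasAntidiagonal.antidiagonal N, (if p.2 = 0 then (1:ZMod 8) else 0) *
        (2 * DD p.1 + 4 * A2 p.1) = 2 * DD N + 4 * A2 N := by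
      rw [Finset.sum_eq_single (N, 0)]
      · rw [if_pos rfl, one_mul]
      · intro b hb hne
        rw [Finset.HasAntidiagonal.mem_antidiagonal] at hb
        have : b.2 ≠ 0 := by
          rintro h0
          apply hne
          have : b.1 = N := by omega
          rw [← h0, ← this]
        rw [if_neg this, zero_mul]
      · intro h
        exfalso
        exact h (Finset.HasAntidiagonal.mem_antidiagonal.2 (by simp))
    have hS2cast : ((S2 N : ℕ) : ZMod 8) = ∑ p ∈ Finset.HasAntidiagonal.antidiagonal N, (DD p.1 : ZMod 8) * DD p.2 := by
      rw [S2, Nat.cast_sum]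
      exact Finset.sum_congr rfl (fun p _ => Nat.cast_mul _ _)
    have hs3 : ∑ p ∈ Finset.HasAntidiagonal.antidiagonal N, 4 * (t:ZMod 8) * ((DD p.1 : ZMod 8) * DD p.2)
        = 4 * t * (S2 N : ZMod 8) := by
      rw [hS2cast, Finset.mul_sum]
    rw [hs1, hs2, hs3]
    have hchoose : Nat.choose (t+1) 2 = Nat.choose t 2 + t := by
      rw [Nat.choose_succ_succ, Nat.choose_one_right, add_comm]
    rw [hchoose]
    push_cast
    ring

theorem overpartitionTuples_four_n_three_mod_eight (t n : ℕ) :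
    overpartitionTuples t (4 * n + 3) ≡ 0 [MOD 8] := by
  set N := 4 * n + 3 with hNdef
  have hmod : N % 4 = 3 := by omega
  have hN0 : N ≠ 0 := by omega
  rw [Nat.modEq_zero_iff_dvd, ← ZMod.natCast_eq_zero_iff]
  rw [main_lemma t N, if_neg hN0]
  obtain ⟨e, he⟩ := DD_even_of_mod N hmod
  obtain ⟨s, hs⟩ := S2_div hmod
  obtain ⟨g, hg⟩ := Sg_div hmod
  have hid := identity5 N hN0
  obtain ⟨m, hm⟩ : ∃ m, A2 N + e = 2 * m := ⟨s + e - g, by omega⟩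
  have hA2 : ((A2 N : ℕ) : ZMod 8) = 2 * (m : ZMod 8) - (e : ZMod 8) := by
    have := congrArg (Nat.cast : ℕ → ZMod 8) hm
    push_cast at this
    linear_combination this
  rw [he, hs, hA2]
  calc (0 : ZMod 8) + 2 * t * ((2 * e : ℕ) : ZMod 8)
        + 4 * ((t : ZMod 8) * (2 * (m : ZMod 8) - (e : ZMod 8)) + (Nat.choose t 2 : ZMod 8) * ((4 * s : ℕ) : ZMod 8))
      = 8 * ((t : ZMod 8) * m + 2 * (Nat.choose t 2 : ZMod 8) * s) := by push_cast; ring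
    _ = 0 := by rw [show (8 : ZMod 8) = 0 from by decide, zero_mul]
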